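/- With β = μ + δ·s/n, d₀ = μ + δ·α/n, and s ≥ α ≥ 0, we have n(d₀ - β) + n·d₀·ln(β/d₀) ≤ -δ²(s - α)²/(6(nμ + δα)). -/

import Mathlib

lemma log_le_aux (x : ℝ) (h0 : 0 ≤ x) (h1 : x ≤ 1) :
    Real.log (1 + x) ≤ x - x ^ 2 / 6 := by
  set f : ℝ → ℝ := fun y => y - y ^ 2 / 6 - Real.log (1 + y) with hf
  have hcont : ContinuousOn f (Set.Icc 0 1) := by
    apply ContinuousOn.sub
    · fun_prop
    · apply ContinuousOn.log
      · fun_prop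
      · intro y hy
        simp only [Set.mem_Icc] at hy
        linarith [hy.1]
  have hderiv : ∀ y ∈ Set.Ioo (0:ℝ) 1, HasDerivAt f (1 - y/3 - 1/(1+y)) y := by
    intro y hy
    have hy1 : (0:ℝ) < 1 + y := by linarith [hy.1]
    have h1 : HasDerivAt (fun y : ℝ => y - y ^ 2 / 6) (1 - y/3) y := by
      have := ((hasDerivAt_id y).sub (((hasDerivAt_pow 2 y)).div_const 6))
      refine this.congr_deriv ?_
      ring
    have h2 : HasDerivAt (fun y : ℝ => Real.log (1 + y)) (1/(1+y)) y := by
      have := (Real.hasDerivAt_log (ne_of_gt hy1)).comp y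
        ((hasDerivAt_const y (1:ℝ)).add (hasDerivAt_id y))
      refine this.congr_deriv ?_
      simp
    exact h1.sub h2
  have hmono : MonotoneOn f (Set.Icc 0 1) := by
    apply monotoneOn_of_deriv_nonneg (convex_Icc 0 1) hcont
    · intro y hy
      rw [interior_Icc] at hy
      exact (hderiv y hy).differentiableAt.differentiableWithinAt
    · intro y hy
      rw [interior_Icc] at hy
      rw [(hderiv y hy).deriv]
      have hy1 : (0:ℝ) < 1 + y := by linarith [hy.1]
      rw [sub_nonneg, div_le_iff₀ hy1]
      nlinarith [hy.1, hy.2]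
  have h0mem : (0:ℝ) ∈ Set.Icc (0:ℝ) 1 := by constructor <;> norm_num
  have hxmem : x ∈ Set.Icc (0:ℝ) 1 := ⟨h0, h1⟩
  have := hmono h0mem hxmem h0
  simp only [hf] at this
  simp only [add_zero, Real.log_one] at this
  norm_num at this
  linarith

theorem stmt_15 (μ δ n s α : ℝ) (hμ : 0 < μ) (hδ : 0 < δ) (hn : 0 < n)
    (hα : 0 ≤ α) (hαs : α ≤ s) (hsn : s ≤ n)
    (β d₀ : ℝ) (hβ : β = μ + δ * s / n) (hd₀ : d₀ = μ + δ * α / n)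
    (hx1 : δ * (s - α) / (n * μ + δ * α) ≤ 1) :
    n * (d₀ - β) + n * d₀ * Real.log (β / d₀)
      ≤ -(δ ^ 2 * (s - α) ^ 2) / (6 * (n * μ + δ * α)) := by
  have hD : 0 < n * μ + δ * α := by positivity
  set x := δ * (s - α) / (n * μ + δ * α) with hxdef
  have hx0 : 0 ≤ x := by
    apply div_nonneg _ hD.le
    nlinarith
  have hd₀pos : 0 < d₀ := by
    rw [hd₀]; positivity
  have hratio : β / d₀ = 1 + x := by
    rw [hβ, hd₀, hxdef]
    field_simp
    ring
  have hlog : Real.log (β / d₀) ≤ x - x ^ 2 / 6 := by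
    rw [hratio]; exact log_le_aux x hx0 hx1
  have hnd₀ : n * d₀ = n * μ + δ * α := by
    rw [hd₀]; field_simp
  have hdiff : n * (d₀ - β) = -((n * μ + δ * α) * x) := by
    rw [hβ, hd₀, hxdef]
    field_simp
    ring
  have hsq : (n * μ + δ * α) * (x ^ 2 / 6) = δ ^ 2 * (s - α) ^ 2 / (6 * (n * μ + δ * α)) := by
    rw [hxdef]
    field_simp
  calc n * (d₀ - β) + n * d₀ * Real.log (β / d₀)
      ≤ n * (d₀ - β) + (n * μ + δ * α) * (x - x ^ 2 / 6) := by
        rw [hnd₀]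
        have := mul_le_mul_of_nonneg_left hlog hD.le
        linarith
    _ = -((n * μ + δ * α) * (x ^ 2 / 6)) := by rw [hdiff]; ring
    _ = -(δ ^ 2 * (s - α) ^ 2) / (6 * (n * μ + δ * α)) := by rw [hsq]; ring
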